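/- Let n ≥ 1 and for symmetric C, D ∈ ℝ^{n×n} define OGW(C,D) := (1/n²)(‖C‖_F² + ‖D‖_F² − 2·sup_{P ∈ O_n ∩ E_n} tr(C P D Pᵀ)), where O_n := {P ∈ ℝ^{n×n} : Pᵀ P = I} and E_n := {P ∈ ℝ^{n×n} : P·1 = Pᵀ·1 = 1}. Then OGW is symmetric, i.e., OGW(C,D) = OGW(D,C) for all symmetric C, D, and nonnegative, i.e., OGW(C,D) ≥ 0 for all symmetric C, D. -/

import Mathlib

open Matrix BigOperators

noncomputable section

/-- Squared Frobenius norm of a real matrix. -/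
def frobSq {m n : ℕ} (A : Matrix (Fin m) (Fin n) ℝ) : ℝ := ∑ i, ∑ j, (A i j) ^ 2

/-- Euclidean norm of a real vector. -/
def vnorm {n : ℕ} (v : Fin n → ℝ) : ℝ := Real.sqrt (∑ i, (v i) ^ 2)

/-- Eigenvalues of a real symmetric (Hermitian) matrix, listed in descending order. -/
def eigDesc {n : ℕ} {A : Matrix (Fin n) (Fin n) ℝ} (hA : A.IsHermitian) : Fin n → ℝ :=
  fun i => (hA.eigenvalues ∘ Tuple.sort hA.eigenvalues) i.rev

/-- Conjugating a real symmetric (Hermitian) matrix preserves symmetry. -/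
theorem conjHerm {n m : ℕ} (V : Matrix (Fin n) (Fin m) ℝ) {C : Matrix (Fin n) (Fin n) ℝ}
    (hC : C.IsHermitian) : (Vᵀ * C * V).IsHermitian := by
  have h := Matrix.isHermitian_mul_mul_conjTranspose Vᵀ hC
  simpa using h


/-- The set `O_n ∩ E_n` of orthogonal matrices whose row and column sums all equal `1`. -/
def OE (n : ℕ) : Set (Matrix (Fin n) (Fin n) ℝ) :=
  {P | Pᵀ * P = 1 ∧ (P *ᵥ (fun _ => (1 : ℝ)) = fun _ => 1)
    ∧ (Pᵀ *ᵥ (fun _ => (1 : ℝ)) = fun _ => 1)}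

/-- The orthogonal Gromov-Wasserstein discrepancy `OGW`. -/
def OGW (n : ℕ) (C D : Matrix (Fin n) (Fin n) ℝ) : ℝ :=
  (1 / (n : ℝ) ^ 2) * (frobSq C + frobSq D
    - 2 * sSup ((fun P => Matrix.trace (C * P * D * Pᵀ)) '' (OE n)))

lemma frobSq_eq_trace {n : ℕ} (A : Matrix (Fin n) (Fin n) ℝ) :
    frobSq A = Matrix.trace (Aᵀ * A) := by
  simp [frobSq, Matrix.trace, Matrix.diag, Matrix.mul_apply, sq]
  exact Finset.sum_comm

lemma frobSq_nonneg {n : ℕ} (A : Matrix (Fin n) (Fin n) ℝ) : 0 ≤ frobSq A :=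
  Finset.sum_nonneg fun _ _ => Finset.sum_nonneg fun _ _ => sq_nonneg _

lemma frobSq_sub_expand {n : ℕ} (C M : Matrix (Fin n) (Fin n) ℝ) :
    frobSq (C - M) = frobSq C + frobSq M - 2 * Matrix.trace (Cᵀ * M) := by
  simp [frobSq, Matrix.trace, Matrix.diag, Matrix.mul_apply, Matrix.sub_apply, sub_sq,
    Finset.sum_add_distrib, Finset.sum_sub_distrib, Finset.mul_sum]
  rw [Finset.sum_comm (γ := Fin n)]
  ring_nf
  rw [show (∑ x : Fin n, ∑ x_1 : Fin n, C x_1 x * M x_1 x * 2)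
      = ∑ x : Fin n, ∑ x_1 : Fin n, C x x_1 * M x x_1 * 2 from Finset.sum_comm]
  ring

lemma OE_transpose {n : ℕ} {P : Matrix (Fin n) (Fin n) ℝ} (h : P ∈ OE n) : Pᵀ ∈ OE n := by
  obtain ⟨h1, h2, h3⟩ := h
  refine ⟨?_, h3, by simpa using h2⟩
  rw [Matrix.transpose_transpose]
  exact mul_eq_one_comm.mp h1

lemma one_mem_OE (n : ℕ) : (1 : Matrix (Fin n) (Fin n) ℝ) ∈ OE n := by
  refine ⟨by simp, by simp, by simp⟩

lemma trace_swap {n : ℕ} (C D P : Matrix (Fin n) (Fin n) ℝ) :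
    Matrix.trace (D * Pᵀ * C * Pᵀᵀ) = Matrix.trace (C * P * D * Pᵀ) := by
  rw [Matrix.transpose_transpose, show D * Pᵀ * C * P = (D * Pᵀ) * (C * P) from by
    rw [Matrix.mul_assoc], Matrix.trace_mul_comm]
  simp [Matrix.mul_assoc]

lemma image_swap {n : ℕ} (C D : Matrix (Fin n) (Fin n) ℝ) :
    ((fun P => Matrix.trace (C * P * D * Pᵀ)) '' (OE n))
      = ((fun P => Matrix.trace (D * P * C * Pᵀ)) '' (OE n)) := by
  ext x
  constructor
  · rintro ⟨P, hP, rfl⟩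
    exact ⟨Pᵀ, OE_transpose hP, trace_swap C D P⟩
  · rintro ⟨P, hP, rfl⟩
    exact ⟨Pᵀ, OE_transpose hP, trace_swap D C P⟩

lemma trace_bound {n : ℕ} {C D P : Matrix (Fin n) (Fin n) ℝ} (hC : C.IsSymm) (hP : P ∈ OE n) :
    Matrix.trace (C * P * D * Pᵀ) ≤ (frobSq C + frobSq D) / 2 := by
  obtain ⟨h1, -, -⟩ := hP
  set M := P * D * Pᵀ with hM
  have hMtM : Mᵀ * M = P * (Dᵀ * D) * Pᵀ := by
    rw [hM]
    simp only [Matrix.transpose_mul, Matrix.transpose_transpose, Matrix.mul_assoc]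
    rw [← Matrix.mul_assoc Pᵀ P (D * Pᵀ), h1, Matrix.one_mul]
  have hfM : frobSq M = frobSq D := by
    rw [frobSq_eq_trace, hMtM, Matrix.trace_mul_comm, ← Matrix.mul_assoc, h1, Matrix.one_mul,
      frobSq_eq_trace]
  have htr : Matrix.trace (Cᵀ * M) = Matrix.trace (C * P * D * Pᵀ) := by
    rw [hC.eq, hM]
    simp [Matrix.mul_assoc]
  have h0 := frobSq_nonneg (C - M)
  rw [frobSq_sub_expand, hfM, htr] at h0
  linarith

/-- `OGW` is symmetric in its arguments and nonnegative on symmetric matrices. -/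
theorem OGW_symm_nonneg (n : ℕ) (hn : 1 ≤ n) :
    (∀ C D : Matrix (Fin n) (Fin n) ℝ, C.IsSymm → D.IsSymm → OGW n C D = OGW n D C)
    ∧ (∀ C D : Matrix (Fin n) (Fin n) ℝ, C.IsSymm → D.IsSymm → 0 ≤ OGW n C D) := by
  constructor
  · intro C D _ _
    rw [OGW, OGW, image_swap]
    ring
  · intro C D hC _
    have hsup : sSup ((fun P => Matrix.trace (C * P * D * Pᵀ)) '' (OE n))
        ≤ (frobSq C + frobSq D) / 2 := by
      apply Real.sSup_le
      · rintro x ⟨P, hP, rfl⟩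
        exact trace_bound hC hP
      · have := frobSq_nonneg C
        have := frobSq_nonneg D
        linarith
    apply mul_nonneg
    · positivity
    · linarith

end
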